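/- For every a ∈ (0,1) one has the integral identity (π/2)·∫_{−π/2}^{π/2} ((1+a²)·cos²t + 2a²·sin²t)²·cos t / (a·(cos²t + a²·sin²t)^{5/2}) dt = 7π/3 + (2π/3)a² + (π/a)·arcsin(√(1−a²))/√(1−a²). (This computes the Willmore energy of the prolate spheroid (a cos t cos θ, a cos t sin θ, sin t).) -/

import Mathlib

open Real

set_option maxHeartbeats 1000000 in
theorem willmore_energy_of_spheroid (a : ℝ) (ha : a ∈ Set.Ioo (0 : ℝ) 1) :
    (π / 2) * ∫ t in (-(π / 2))..(π / 2),
        ((1 + a ^ 2) * cos t ^ 2 + 2 * a ^ 2 * sin t ^ 2) ^ 2 * cos t /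
          (a * (cos t ^ 2 + a ^ 2 * sin t ^ 2) ^ ((5 : ℝ) / 2))
      = 7 * π / 3 + (2 * π / 3) * a ^ 2
        + (π / a) * (arcsin (Real.sqrt (1 - a ^ 2)) / Real.sqrt (1 - a ^ 2)) := by
  obtain ⟨ha0, ha1⟩ := ha
  set k := Real.sqrt (1 - a ^ 2) with hkdef
  have hk2 : k ^ 2 = 1 - a ^ 2 := Real.sq_sqrt (by nlinarith)
  have hk0 : 0 < k := Real.sqrt_pos.mpr (by nlinarith)
  have hk1 : k < 1 := by nlinarith
  have hD : ∀ t : ℝ, 0 < cos t ^ 2 + a ^ 2 * sin t ^ 2 := fun t => by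
    nlinarith [sin_sq_add_cos_sq t, sq_nonneg (sin t), sq_nonneg (cos t)]
  -- replace the rpow by sqrt form
  have hpow : ∀ t : ℝ, (cos t ^ 2 + a ^ 2 * sin t ^ 2) ^ ((5 : ℝ) / 2)
      = (cos t ^ 2 + a ^ 2 * sin t ^ 2) ^ 2 * Real.sqrt (cos t ^ 2 + a ^ 2 * sin t ^ 2) := by
    intro t
    rw [show ((5 : ℝ) / 2) = ((2 : ℕ) : ℝ) + (1/2 : ℝ) by norm_num,
      Real.rpow_add (hD t), Real.rpow_natCast, ← Real.sqrt_eq_rpow]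
  have hEq : Set.EqOn
      (fun t => ((1 + a ^ 2) * cos t ^ 2 + 2 * a ^ 2 * sin t ^ 2) ^ 2 * cos t /
          (a * (cos t ^ 2 + a ^ 2 * sin t ^ 2) ^ ((5 : ℝ) / 2)))
      (fun t => ((1 + a ^ 2) * cos t ^ 2 + 2 * a ^ 2 * sin t ^ 2) ^ 2 * cos t /
          (a * ((cos t ^ 2 + a ^ 2 * sin t ^ 2) ^ 2 * Real.sqrt (cos t ^ 2 + a ^ 2 * sin t ^ 2))))
      (Set.uIcc (-(π / 2)) (π / 2)) := fun t _ => by simp only [hpow t]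
  rw [intervalIntegral.integral_congr hEq]
  -- the antiderivative
  set F : ℝ → ℝ := fun t => (1/(a*k)) * arcsin (k * sin t)
      + (2*a + 2*a^3/3) * sin t / Real.sqrt (cos t^2 + a^2*sin t^2)
      + (a^3/3) * sin t / ((cos t^2 + a^2*sin t^2) * Real.sqrt (cos t^2 + a^2*sin t^2)) with hF
  have key : ∀ t : ℝ, HasDerivAt F
      (((1 + a ^ 2) * cos t ^ 2 + 2 * a ^ 2 * sin t ^ 2) ^ 2 * cos t /
          (a * ((cos t ^ 2 + a ^ 2 * sin t ^ 2) ^ 2 * Real.sqrt (cos t ^ 2 + a ^ 2 * sin t ^ 2)))) t := by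
    intro t
    have hst : sin t ^ 2 + cos t ^ 2 = 1 := sin_sq_add_cos_sq t
    have hDt := hD t
    obtain ⟨q, hq, hq2, hqpos⟩ : ∃ q : ℝ, Real.sqrt (cos t ^ 2 + a ^ 2 * sin t ^ 2) = q ∧
        q ^ 2 = cos t ^ 2 + a ^ 2 * sin t ^ 2 ∧ 0 < q :=
      ⟨_, rfl, Real.sq_sqrt hDt.le, Real.sqrt_pos.mpr hDt⟩
    have hDq : cos t ^ 2 + a ^ 2 * sin t ^ 2 = q ^ 2 := hq2.symm
    have hD' : HasDerivAt (fun t : ℝ => cos t ^ 2 + a ^ 2 * sin t ^ 2)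
        ((2:ℕ) * cos t ^ 1 * (-sin t) + a ^ 2 * ((2:ℕ) * sin t ^ 1 * cos t)) t :=
      (((Real.hasDerivAt_cos t).pow 2)).add ((((Real.hasDerivAt_sin t).pow 2)).const_mul (a^2))
    have hsqrt : HasDerivAt (fun t : ℝ => Real.sqrt (cos t ^ 2 + a ^ 2 * sin t ^ 2))
        ((1 / (2 * q)) * ((2:ℕ) * cos t ^ 1 * (-sin t) + a ^ 2 * ((2:ℕ) * sin t ^ 1 * cos t))) t := by
      have := (Real.hasDerivAt_sqrt hDt.ne').comp t hD'
      rwa [hq] at this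
    have hks : HasDerivAt (fun t : ℝ => k * sin t) (k * cos t) t := (Real.hasDerivAt_sin t).const_mul k
    have hbnd : |k * sin t| < 1 := by
      rw [abs_mul]
      calc |k| * |sin t| ≤ |k| * 1 := mul_le_mul_of_nonneg_left (abs_sin_le_one t) (abs_nonneg k)
        _ < 1 := by rw [mul_one, abs_of_pos hk0]; exact hk1
    have harcsin : HasDerivAt (fun t : ℝ => arcsin (k * sin t))
        ((1 / Real.sqrt (1 - (k * sin t) ^ 2)) * (k * cos t)) t :=
      (Real.hasDerivAt_arcsin (by nlinarith [abs_lt.mp hbnd]) (by nlinarith [abs_lt.mp hbnd])).comp t hks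
    have harg : 1 - (k * sin t) ^ 2 = cos t ^ 2 + a ^ 2 * sin t ^ 2 := by
      linear_combination (-(sin t ^ 2)) * hk2 - hst
    rw [harg, hq] at harcsin
    -- term 1
    have h1 : HasDerivAt (fun t : ℝ => (1/(a*k)) * arcsin (k * sin t)) (cos t / (a * q)) t := by
      have h := harcsin.const_mul (1/(a*k))
      refine h.congr_deriv ?_
      field_simp
    -- term 2
    have h2 : HasDerivAt (fun t : ℝ => (2*a + 2*a^3/3) * sin t / Real.sqrt (cos t^2 + a^2*sin t^2))
        ((2*a + 2*a^3/3) * cos t * (q ^ 2 - sin t ^ 2 * (a^2 - 1)) / q ^ 3) t := by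
      have h := ((Real.hasDerivAt_sin t).const_mul (2*a + 2*a^3/3)).div hsqrt
        (by rw [hq]; exact hqpos.ne')
      rw [hq] at h
      refine h.congr_deriv ?_
      push_cast
      field_simp
      ring
    -- term 3
    have h3 : HasDerivAt (fun t : ℝ => (a^3/3) * sin t /
          ((cos t^2 + a^2*sin t^2) * Real.sqrt (cos t^2 + a^2*sin t^2)))
        ((a^3/3) * cos t * (q ^ 2 - 3 * sin t ^ 2 * (a^2 - 1)) / q ^ 5) t := by
      have hden := hD'.mul hsqrt
      have h := ((Real.hasDerivAt_sin t).const_mul (a^3/3)).div hden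
        (by simp only [Pi.mul_apply]; rw [hq]; positivity)
      simp only [Pi.mul_apply] at h
      rw [hq, hDq] at h
      refine h.congr_deriv ?_
      push_cast
      field_simp
      ring
    have e2 : q ^ 2 - sin t ^ 2 * (a^2 - 1) = 1 := by linear_combination hq2 + hst
    have e3 : q ^ 2 - 3 * sin t ^ 2 * (a^2 - 1) = 3 - 2 * q ^ 2 := by
      linear_combination 3 * hq2 + 3 * hst
    rw [e2] at h2
    rw [e3] at h3
    have H := (h1.add h2).add h3
    refine H.congr_deriv ?_
    have eN : (1 + a ^ 2) * cos t ^ 2 + 2 * a ^ 2 * sin t ^ 2 = q ^ 2 + a ^ 2 := by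
      linear_combination a ^ 2 * hst - hq2
    rw [hq, eN, hDq]
    field_simp
    ring
  have hint : IntervalIntegrable
      (fun t => ((1 + a ^ 2) * cos t ^ 2 + 2 * a ^ 2 * sin t ^ 2) ^ 2 * cos t /
          (a * ((cos t ^ 2 + a ^ 2 * sin t ^ 2) ^ 2 * Real.sqrt (cos t ^ 2 + a ^ 2 * sin t ^ 2))))
      MeasureTheory.volume (-(π / 2)) (π / 2) := by
    apply Continuous.intervalIntegrable
    apply Continuous.div (by fun_prop) (by fun_prop)
    intro x
    have h1 := hD x
    have h2 : 0 < Real.sqrt (cos x ^ 2 + a ^ 2 * sin x ^ 2) := Real.sqrt_pos.mpr h1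
    positivity
  rw [intervalIntegral.integral_eq_sub_of_hasDerivAt (fun t _ => key t) hint]
  -- evaluate endpoints
  have hsq : Real.sqrt (a ^ 2) = a := Real.sqrt_sq ha0.le
  rw [hF]
  simp only [sin_pi_div_two, cos_pi_div_two, sin_neg, cos_neg, mul_neg_one, mul_one]
  rw [Real.arcsin_neg]
  norm_num [hsq]
  field_simp
  ring
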